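/- Let O be an order in a finite-dimensional division ℚ-algebra such that the unit group Oˣ is finite. Then the abelianization of the group GE₂(O) is finite. -/

import Mathlib

/-- The subgroup of `GL₂(R)` generated by the elementary matrices
`1 + r·e₁₂` and `1 + r·e₂₁`. -/
def E2 (R : Type*) [Ring R] : Subgroup (Matrix (Fin 2) (Fin 2) R)ˣ :=
  Subgroup.closure {M : (Matrix (Fin 2) (Fin 2) R)ˣ | ∃ r : R,
    M.val = 1 + Matrix.single 0 1 r ∨
    M.val = 1 + Matrix.single 1 0 r}

/-- The subgroup of `GL₂(R)` of invertible diagonal matrices `diag(α, β)`, `α, β ∈ Rˣ`. -/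
def D2 (R : Type*) [Ring R] : Subgroup (Matrix (Fin 2) (Fin 2) R)ˣ :=
  Subgroup.closure {M : (Matrix (Fin 2) (Fin 2) R)ˣ | ∃ α β : Rˣ,
    M.val = Matrix.diagonal ![(α : R), (β : R)]}

/-- The subgroup of `GL₂(R)` generated by `E₂(R)` and the invertible diagonal matrices. -/
def GE2 (R : Type*) [Ring R] : Subgroup (Matrix (Fin 2) (Fin 2) R)ˣ := E2 R ⊔ D2 R

namespace GE2Aux

open Matrix

variable {R : Type*} [Ring R]

lemma e12_mul (a b : R) :
    (1 + single (0:Fin 2) (1:Fin 2) a) * (1 + single (0:Fin 2) (1:Fin 2) b)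
      = 1 + single (0:Fin 2) (1:Fin 2) (a + b) := by
  have h : single (0:Fin 2) (1:Fin 2) a * single (0:Fin 2) (1:Fin 2) b = 0 :=
    Matrix.single_mul_single_of_ne _ _ _ _ (by decide) b
  rw [mul_add, add_mul, add_mul, mul_one, one_mul, mul_one, h, single_add]
  abel

lemma e21_mul (a b : R) :
    (1 + single (1:Fin 2) (0:Fin 2) a) * (1 + single (1:Fin 2) (0:Fin 2) b)
      = 1 + single (1:Fin 2) (0:Fin 2) (a + b) := by
  have h : single (1:Fin 2) (0:Fin 2) a * single (1:Fin 2) (0:Fin 2) b = 0 :=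
    Matrix.single_mul_single_of_ne _ _ _ _ (by decide) b
  rw [mul_add, add_mul, add_mul, mul_one, one_mul, mul_one, h, single_add]
  abel

/-- elementary unit E₁₂(r) -/
def E12u (r : R) : (Matrix (Fin 2) (Fin 2) R)ˣ where
  val := 1 + single (0:Fin 2) (1:Fin 2) r
  inv := 1 + single (0:Fin 2) (1:Fin 2) (-r)
  val_inv := by rw [e12_mul]; simp
  inv_val := by rw [e12_mul]; simp

/-- elementary unit E₂₁(r) -/
def E21u (r : R) : (Matrix (Fin 2) (Fin 2) R)ˣ where
  val := 1 + single (1:Fin 2) (0:Fin 2) r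
  inv := 1 + single (1:Fin 2) (0:Fin 2) (-r)
  val_inv := by rw [e21_mul]; simp
  inv_val := by rw [e21_mul]; simp

lemma vec_mul_vec' (α β γ δ : R) :
    (fun i => ![α, β] i * ![γ, δ] i) = ![α * γ, β * δ] := by
  funext i; fin_cases i <;> simp

lemma vec_one : ![(1:R), 1] = fun _ => 1 := by funext i; fin_cases i <;> rfl

lemma diag_mul_diag (α β γ δ : R) :
    (diagonal ![α, β] : Matrix (Fin 2) (Fin 2) R) * diagonal ![γ, δ]
      = diagonal ![α * γ, β * δ] := by
  rw [diagonal_mul_diagonal, vec_mul_vec']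

/-- diagonal unit -/
def Du (α β : Rˣ) : (Matrix (Fin 2) (Fin 2) R)ˣ where
  val := diagonal ![(α : R), (β : R)]
  inv := diagonal ![((α⁻¹ : Rˣ) : R), ((β⁻¹ : Rˣ) : R)]
  val_inv := by rw [diag_mul_diag]; simp [vec_one]
  inv_val := by rw [diag_mul_diag]; simp [vec_one]

lemma E12u_mul (a b : R) : E12u a * E12u b = E12u (a + b) := Units.ext (e12_mul a b)

lemma E21u_mul (a b : R) : E21u a * E21u b = E21u (a + b) := Units.ext (e21_mul a b)

lemma E12u_zero : E12u (0 : R) = 1 := Units.ext (by simp [E12u])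

lemma E21u_zero : E21u (0 : R) = 1 := Units.ext (by simp [E21u])

lemma Du_mul (α β γ δ : Rˣ) : Du α β * Du γ δ = Du (α * γ) (β * δ) := by
  apply Units.ext
  show diagonal _ * diagonal _ = diagonal _
  rw [diag_mul_diag]
  rfl

lemma Du_one : Du (1 : Rˣ) 1 = 1 := by
  apply Units.ext
  show diagonal _ = 1
  simp only [Units.val_one]
  rw [vec_one]
  exact diagonal_one

lemma Du_inv (α β : Rˣ) : (Du α β)⁻¹ = Du α⁻¹ β⁻¹ := Units.ext rfl

lemma Du_conj_E12 (α β : Rˣ) (r : R) :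
    Du α β * E12u r * (Du α β)⁻¹ = E12u ((α : R) * r * ((β⁻¹ : Rˣ) : R)) := by
  rw [Du_inv]
  apply Units.ext
  show diagonal _ * (1 + _) * diagonal _ = 1 + _
  ext i j
  fin_cases i <;> fin_cases j <;>
    simp [mul_apply, Fin.sum_univ_two, single, diagonal, Matrix.one_apply,
      Matrix.add_apply]

lemma Du_conj_E21 (α β : Rˣ) (r : R) :
    Du α β * E21u r * (Du α β)⁻¹ = E21u ((β : R) * r * ((α⁻¹ : Rˣ) : R)) := by
  rw [Du_inv]
  apply Units.ext
  show diagonal _ * (1 + _) * diagonal _ = 1 + _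
  ext i j
  fin_cases i <;> fin_cases j <;>
    simp [mul_apply, Fin.sum_univ_two, single, diagonal, Matrix.one_apply,
      Matrix.add_apply]

lemma E12u_mem (r : R) : E12u r ∈ GE2 R :=
  Subgroup.mem_sup_left (Subgroup.subset_closure ⟨r, Or.inl rfl⟩)

lemma E21u_mem (r : R) : E21u r ∈ GE2 R :=
  Subgroup.mem_sup_left (Subgroup.subset_closure ⟨r, Or.inr rfl⟩)

lemma Du_mem (α β : Rˣ) : Du α β ∈ GE2 R :=
  Subgroup.mem_sup_right (Subgroup.subset_closure ⟨α, β, rfl⟩)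

/-- `E₁₂(r)` as an element of `GE₂(R)`. -/
def E12G (r : R) : ↥(GE2 R) := ⟨E12u r, E12u_mem r⟩

/-- `E₂₁(r)` as an element of `GE₂(R)`. -/
def E21G (r : R) : ↥(GE2 R) := ⟨E21u r, E21u_mem r⟩

/-- `diag(α,β)` as an element of `GE₂(R)`. -/
def DuG (α β : Rˣ) : ↥(GE2 R) := ⟨Du α β, Du_mem α β⟩

lemma E12G_mul (a b : R) : E12G a * E12G b = E12G (a + b) := Subtype.ext (E12u_mul a b)

lemma E21G_mul (a b : R) : E21G a * E21G b = E21G (a + b) := Subtype.ext (E21u_mul a b)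

lemma E12G_zero : E12G (0 : R) = 1 := Subtype.ext E12u_zero

lemma E21G_zero : E21G (0 : R) = 1 := Subtype.ext E21u_zero

/-- image of `E₁₂(r)` in the abelianization -/
noncomputable def gg (r : R) : Abelianization ↥(GE2 R) := Abelianization.of (E12G r)

/-- image of `E₂₁(r)` in the abelianization -/
noncomputable def hh (r : R) : Abelianization ↥(GE2 R) := Abelianization.of (E21G r)

lemma gg_add (a b : R) : gg (a + b) = gg a * gg b := by
  rw [gg, gg, gg, ← E12G_mul, _root_.map_mul]

lemma hh_add (a b : R) : hh (a + b) = hh a * hh b := by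
  rw [hh, hh, hh, ← E21G_mul, _root_.map_mul]

lemma gg_zero : gg (0 : R) = 1 := by rw [gg, E12G_zero, _root_.map_one]

lemma hh_zero : hh (0 : R) = 1 := by rw [hh, E21G_zero, _root_.map_one]

lemma gg_neg (r : R) : gg (-r) = gg r := by
  have key : E12G (-r) = DuG (-1 : Rˣ) 1 * E12G r * (DuG (-1 : Rˣ) 1)⁻¹ := by
    apply Subtype.ext
    push_cast [E12G, DuG]
    rw [Du_conj_E12]
    simp
  rw [gg, gg, key, _root_.map_mul, _root_.map_mul, _root_.map_inv, mul_right_comm, mul_inv_cancel, one_mul]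

lemma hh_neg (r : R) : hh (-r) = hh r := by
  have key : E21G (-r) = DuG (-1 : Rˣ) 1 * E21G r * (DuG (-1 : Rˣ) 1)⁻¹ := by
    apply Subtype.ext
    push_cast [E21G, DuG]
    rw [Du_conj_E21]
    simp
  rw [hh, hh, key, _root_.map_mul, _root_.map_mul, _root_.map_inv, mul_right_comm, mul_inv_cancel, one_mul]

lemma gg_sq (r : R) : gg r * gg r = 1 := by
  nth_rewrite 1 [← gg_neg r]
  rw [← gg_add, neg_add_cancel, gg_zero]

lemma hh_sq (r : R) : hh r * hh r = 1 := by
  nth_rewrite 1 [← hh_neg r]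
  rw [← hh_add, neg_add_cancel, hh_zero]

lemma gg_inv (r : R) : gg (-r) = (gg r)⁻¹ := by
  rw [gg_neg, eq_comm, inv_eq_iff_mul_eq_one, gg_sq]

lemma hh_inv (r : R) : hh (-r) = (hh r)⁻¹ := by
  rw [hh_neg, eq_comm, inv_eq_iff_mul_eq_one, hh_sq]

/-- the diagonal subgroup hom into the abelianization -/
noncomputable def FD : Rˣ × Rˣ →* Abelianization ↥(GE2 R) where
  toFun p := Abelianization.of (DuG p.1 p.2)
  map_one' := by
    show Abelianization.of (DuG 1 1) = 1
    rw [show (DuG 1 1 : ↥(GE2 R)) = 1 from Subtype.ext Du_one, _root_.map_one]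
  map_mul' p q := by
    show Abelianization.of (DuG (p.1 * q.1) (p.2 * q.2)) = _
    rw [show DuG (p.1 * q.1) (p.2 * q.2) = DuG p.1 p.2 * DuG q.1 q.2 from
      Subtype.ext (Du_mul p.1 p.2 q.1 q.2).symm, _root_.map_mul]

end GE2Aux

open GE2Aux Matrix in
/-- Let `O` be an order in a finite-dimensional division `ℚ`-algebra with
`Oˣ` finite. Then the abelianization of `GE₂(O)` is finite. -/
theorem abelianization_GE2_finite
    (D : Type*) [DivisionRing D] [Algebra ℚ D] [FiniteDimensional ℚ D]
    (O : Subring D) (hfg : Module.Finite ℤ ↥O) (hspan : Submodule.span ℚ (O : Set D) = ⊤)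
    (hU : Finite (↥O)ˣ) :
    Finite (Abelianization ↥(GE2 ↥O)) := by
  classical
  set R := ↥O
  set A := Abelianization ↥(GE2 R) with hA
  -- a finite generating set of O as a ℤ-module
  obtain ⟨S, hS⟩ : (⊤ : Submodule ℤ R).FG := hfg.fg_top
  have hSclos : AddSubgroup.closure (↑S : Set R) = ⊤ := by
    have h1 := Submodule.span_int_eq_addSubgroupClosure (↑S : Set R)
    rw [hS] at h1
    rw [← h1]
    rfl
  -- generating set of the abelianization
  set T : Set A := (Set.range fun p : Rˣ × Rˣ => FD p) ∪
      ((fun s : R => gg s) '' ↑S) ∪ ((fun s : R => hh s) '' ↑S) with hT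
  have hTfin : T.Finite := by
    refine (Set.Finite.union (Set.Finite.union ?_ ?_) ?_)
    · exact Set.finite_range _
    · exact (S.finite_toSet).image _
    · exact (S.finite_toSet).image _
  -- every gg r is in the closure of T
  have hg12 : ∀ r : R, gg r ∈ Subgroup.closure T := by
    intro r
    have hr : r ∈ AddSubgroup.closure (↑S : Set R) := hSclos ▸ AddSubgroup.mem_top r
    refine AddSubgroup.closure_induction
      (p := fun x _ => gg x ∈ Subgroup.closure T) ?_ ?_ ?_ ?_ hr
    · intro s hs
      exact Subgroup.subset_closure (Or.inl (Or.inr ⟨s, hs, rfl⟩))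
    · show gg (0 : R) ∈ Subgroup.closure T
      rw [gg_zero]; exact one_mem _
    · intro x y _ _ hx hy
      show gg (x + y) ∈ Subgroup.closure T
      rw [gg_add]; exact mul_mem hx hy
    · intro x _ hx
      show gg (-x) ∈ Subgroup.closure T
      rw [gg_inv]; exact inv_mem hx
  have hg21 : ∀ r : R, hh r ∈ Subgroup.closure T := by
    intro r
    have hr : r ∈ AddSubgroup.closure (↑S : Set R) := hSclos ▸ AddSubgroup.mem_top r
    refine AddSubgroup.closure_induction
      (p := fun x _ => hh x ∈ Subgroup.closure T) ?_ ?_ ?_ ?_ hr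
    · intro s hs
      exact Subgroup.subset_closure (Or.inr ⟨s, hs, rfl⟩)
    · show hh (0 : R) ∈ Subgroup.closure T
      rw [hh_zero]; exact one_mem _
    · intro x y _ _ hx hy
      show hh (x + y) ∈ Subgroup.closure T
      rw [hh_add]; exact mul_mem hx hy
    · intro x _ hx
      show hh (-x) ∈ Subgroup.closure T
      rw [hh_inv]; exact inv_mem hx
  -- every element of the abelianization lies in the closure of T
  have hgen : ∀ x : ↥(GE2 R), Abelianization.of x ∈ Subgroup.closure T := by
    rintro ⟨M, hM⟩
    set Se : Set (Matrix (Fin 2) (Fin 2) R)ˣ :=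
      {M : (Matrix (Fin 2) (Fin 2) R)ˣ | ∃ r : R,
        M.val = 1 + Matrix.single 0 1 r ∨
        M.val = 1 + Matrix.single 1 0 r} with hSe
    set Sd : Set (Matrix (Fin 2) (Fin 2) R)ˣ :=
      {M : (Matrix (Fin 2) (Fin 2) R)ˣ | ∃ α β : Rˣ,
        M.val = Matrix.diagonal ![(α : R), (β : R)]} with hSd
    have hGE : Subgroup.closure (Se ∪ Sd) = GE2 R := Subgroup.closure_union Se Sd
    have hM' : M ∈ Subgroup.closure (Se ∪ Sd) := hGE.symm ▸ hM
    refine Subgroup.closure_induction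
      (p := fun N _ => ∀ h : N ∈ GE2 R,
        Abelianization.of (⟨N, h⟩ : ↥(GE2 R)) ∈ Subgroup.closure T) ?_ ?_ ?_ ?_ hM' hM
    · rintro N (⟨r, hr | hr⟩ | ⟨α, β, hd⟩) h
      · rw [show (⟨N, h⟩ : ↥(GE2 R)) = E12G r from Subtype.ext (Units.ext hr)]
        exact hg12 r
      · rw [show (⟨N, h⟩ : ↥(GE2 R)) = E21G r from Subtype.ext (Units.ext hr)]
        exact hg21 r
      · rw [show (⟨N, h⟩ : ↥(GE2 R)) = DuG α β from Subtype.ext (Units.ext hd)]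
        exact Subgroup.subset_closure (Or.inl (Or.inl ⟨(α, β), rfl⟩))
    · intro h
      rw [show (⟨1, h⟩ : ↥(GE2 R)) = 1 from Subtype.ext rfl, MonoidHom.map_one Abelianization.of]
      exact one_mem _
    · intro x y hx hy px py h
      have hxm : x ∈ GE2 R := hGE ▸ hx
      have hym : y ∈ GE2 R := hGE ▸ hy
      rw [show (⟨x * y, h⟩ : ↥(GE2 R)) = ⟨x, hxm⟩ * ⟨y, hym⟩ from Subtype.ext rfl,
        MonoidHom.map_mul Abelianization.of _ _]
      exact mul_mem (px hxm) (py hym)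
    · intro x hx px h
      have hxm : x ∈ GE2 R := hGE ▸ hx
      rw [show (⟨x⁻¹, h⟩ : ↥(GE2 R)) = (⟨x, hxm⟩ : ↥(GE2 R))⁻¹ from Subtype.ext rfl,
        MonoidHom.map_inv Abelianization.of _]
      exact inv_mem (px hxm)
  have hclos : Subgroup.closure T = (⊤ : Subgroup A) := by
    rw [eq_top_iff]
    rintro a -
    refine QuotientGroup.induction_on a ?_
    intro x
    exact hgen x
  -- T consists of torsion elements
  have htors : Monoid.IsTorsion A := by
    intro a
    have ha : a ∈ Subgroup.closure T := hclos ▸ Subgroup.mem_top a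
    have hle : Subgroup.closure T ≤ CommGroup.torsion A := by
      rw [Subgroup.closure_le]
      intro t ht
      simp only [hT, Set.mem_union, Set.mem_image, Set.mem_range, Finset.mem_coe] at ht
      show IsOfFinOrder t
      obtain ((⟨p, rfl⟩ | ⟨s, _, rfl⟩) | ⟨s, _, rfl⟩) := ht
      · have : Finite (Rˣ × Rˣ) := inferInstance
        exact MonoidHom.isOfFinOrder FD (isOfFinOrder_of_finite p)
      · exact (isOfFinOrder_iff_pow_eq_one).mpr ⟨2, two_pos, by rw [pow_two]; exact gg_sq s⟩
      · exact (isOfFinOrder_iff_pow_eq_one).mpr ⟨2, two_pos, by rw [pow_two]; exact hh_sq s⟩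
    exact hle ha
  have hFG : Group.FG A := Group.fg_iff.mpr ⟨T, hclos, hTfin⟩
  exact CommGroup.finite_of_fg_torsion A htors
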